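/- Let C be a 2-Calabi–Yau triangulated category and let L, N be indecomposable rigid objects with dim_k Hom_C(N, ΣL) = 1. Given a triangle L → M → N →^h ΣL with h ≠ 0, we have Hom_C(M, ΣL) = 0 and, by 2-Calabi–Yau duality, Hom_C(L, ΣM) = 0. -/

import Mathlib

open CategoryTheory Limits Pretriangulated

universe v u

/-- Let `C` be a `k`-linear Hom-finite 2-Calabi–Yau pretriangulated category
(2-CY encoded by the dimension duality `dim Hom(X,Y) = dim Hom(Y, Σ²X)`), and let
`L, N` be indecomposable rigid objects with `dim_k Hom_C(N, ΣL) = 1`.  Given a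
distinguished triangle `L → M → N →ʰ ΣL` with `h ≠ 0`, we have
`Hom_C(M, ΣL) = 0` and, by 2-Calabi–Yau duality, `Hom_C(L, ΣM) = 0`. -/
theorem hom_vanishing_from_exchange_triangle
    {k : Type u} [Field k] (C : Type u) [Category.{v} C] [Preadditive C]
    [Linear k C] [HasZeroObject C] [HasShift C ℤ]
    [∀ n : ℤ, (CategoryTheory.shiftFunctor C n).Additive] [Pretriangulated C]
    (homFin : ∀ X Y : C, FiniteDimensional k (X ⟶ Y))
    (CY2 : ∀ X Y : C, Module.finrank k (X ⟶ Y) = Module.finrank k (Y ⟶ X⟦(2 : ℤ)⟧))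
    (L M N : C)
    (hLrigid : ∀ f : L ⟶ L⟦(1 : ℤ)⟧, f = 0)
    (hNrigid : ∀ f : N ⟶ N⟦(1 : ℤ)⟧, f = 0)
    (hdim : Module.finrank k (N ⟶ L⟦(1 : ℤ)⟧) = 1)
    (f : L ⟶ M) (g : M ⟶ N) (h : N ⟶ L⟦(1 : ℤ)⟧)
    (htri : Triangle.mk f g h ∈ distTriang C)
    (hne : h ≠ 0) :
    (∀ φ : M ⟶ L⟦(1 : ℤ)⟧, φ = 0) ∧ (∀ φ : L ⟶ M⟦(1 : ℤ)⟧, φ = 0) := by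
  have hfirst : ∀ φ : M ⟶ L⟦(1 : ℤ)⟧, φ = 0 := by
    intro φ
    -- φ factors through g since f ≫ φ = 0 by rigidity of L
    obtain ⟨ψ, hψ⟩ := Pretriangulated.Triangle.yoneda_exact₂ (Triangle.mk f g h) htri φ
      (hLrigid (f ≫ φ))
    -- ψ is a scalar multiple of h
    haveI := homFin N (L⟦(1 : ℤ)⟧)
    obtain ⟨c, hc⟩ := (finrank_eq_one_iff_of_nonzero' h hne).mp hdim ψ
    have hgh : g ≫ h = 0 := comp_distTriang_mor_zero₂₃ _ htri
    have hgh' : (Triangle.mk f g h).mor₂ ≫ h = 0 := hgh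
    calc φ = g ≫ ψ := hψ
    _ = g ≫ (c • h) := congrArg (g ≫ ·) hc.symm
    _ = c • (g ≫ h) := by rw [Linear.comp_smul]
    _ = 0 := by rw [hgh, smul_zero]
  refine ⟨hfirst, ?_⟩
  -- Every morphism M⟦1⟧ ⟶ L⟦2⟧ vanishes, by full faithfulness of the shift
  have hshift : ∀ φ' : M⟦(1 : ℤ)⟧ ⟶ L⟦(2 : ℤ)⟧, φ' = 0 := by
    intro φ'
    set e : (L⟦(2 : ℤ)⟧ : C) ≅ (L⟦(1 : ℤ)⟧)⟦(1 : ℤ)⟧ :=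
      (shiftFunctorAdd' C 1 1 2 (by norm_num)).app L with he
    obtain ⟨ψ, hψ⟩ := (shiftFunctor C (1 : ℤ)).map_surjective (φ' ≫ e.hom)
    have : ψ = 0 := hfirst ψ
    have h0 : φ' ≫ e.hom = 0 := by rw [← hψ, this, Functor.map_zero]
    calc φ' = (φ' ≫ e.hom) ≫ e.inv := by simp
    _ = 0 := by rw [h0, zero_comp]
  -- conclude Hom(L, ΣM) = 0 by 2-CY duality
  have hsub : Subsingleton (M⟦(1 : ℤ)⟧ ⟶ L⟦(2 : ℤ)⟧) :=
    subsingleton_of_forall_eq 0 fun a => hshift a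
  have hr0 : Module.finrank k (M⟦(1 : ℤ)⟧ ⟶ L⟦(2 : ℤ)⟧) = 0 := by
    haveI := homFin (M⟦(1 : ℤ)⟧) (L⟦(2 : ℤ)⟧)
    exact Module.finrank_zero_iff.mpr hsub
  have hdual : Module.finrank k (L ⟶ M⟦(1 : ℤ)⟧) = 0 := by
    rw [CY2 L (M⟦(1 : ℤ)⟧)]
    -- Hom(M⟦1⟧, L⟦2⟧) : here CY2 gives Hom(M⟦1⟧ ⟶ L⟦2⟧)
    exact hr0
  intro φ
  haveI := homFin L (M⟦(1 : ℤ)⟧)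
  haveI : Subsingleton (L ⟶ M⟦(1 : ℤ)⟧) := Module.finrank_zero_iff.mp hdual
  exact Subsingleton.elim φ 0
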